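/- Under the hypotheses of the previous statement, if a gradient descent iteration x⁺ = exp_x(−t∇f(x)) with step-size t ∈ (0, 2/H) satisfies f(x⁺) ≤ f(x) − t(1 − Ht/2)‖∇f(x)‖², then f(x⁺) − f(x̄) ≤ q·(f(x) − f(x̄)) where q = 1 − α(1 − α/2)·(h/H)·(1 + h/H) with α = tH, and 0 ≤ q < 1. -/

import Mathlib

open Real Set
open scoped RealInnerProductSpace

private lemma taylor_lb {E : Type*} [NormedAddCommGroup E]
    [InnerProductSpace ℝ E] [CompleteSpace E]
    (f : E → ℝ) (S : Set E) (hconv : Convex ℝ S) (hopen : IsOpen S)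
    (h : ℝ) (hf : ContDiffOn ℝ 2 f S)
    (hHess : ∀ z ∈ S, ∀ v : E, h * ‖v‖ ^ 2 ≤ iteratedFDeriv ℝ 2 f z ![v, v])
    {x y : E} (hx : x ∈ S) (hy : y ∈ S) :
    f x + ⟪gradient f x, y - x⟫ + h / 2 * ‖y - x‖ ^ 2 ≤ f y := by
  set v := y - x with hv
  set c : ℝ → E := fun s => x + s • v with hc
  have hmem : ∀ s ∈ Icc (0:ℝ) 1, c s ∈ S := by
    intro s hs
    have h1 : (0:ℝ) ≤ 1 - s := by linarith [hs.2]
    have := hconv hx hy h1 hs.1 (by ring)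
    convert this using 1
    simp only [hc, hv]
    module
  have hderivc : ∀ s : ℝ, HasDerivAt c v s := by
    intro s
    simpa [hc] using ((hasDerivAt_id s).smul_const v).const_add x
  have hfd : ∀ z ∈ S, HasFDerivAt f (fderiv ℝ f z) z := fun z hz =>
    ((hf.contDiffAt (hopen.mem_nhds hz)).differentiableAt (by norm_num)).hasFDerivAt
  have hFd : ∀ z ∈ S, HasFDerivAt (fderiv ℝ f) (fderiv ℝ (fderiv ℝ f) z) z := fun z hz => by
    have h2 : ContDiffAt ℝ 2 f z := hf.contDiffAt (hopen.mem_nhds hz)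
    have h1 : ContDiffAt ℝ 1 (fderiv ℝ f) z := h2.fderiv_right (by norm_num)
    exact (h1.differentiableAt one_ne_zero).hasFDerivAt
  set g1 : ℝ → ℝ := fun s => f (c s) with hg1
  set g2 : ℝ → ℝ := fun s => fderiv ℝ f (c s) v with hg2
  have hg1' : ∀ s ∈ Icc (0:ℝ) 1, HasDerivAt g1 (g2 s) s := fun s hs =>
    (hfd _ (hmem s hs)).comp_hasDerivAt s (hderivc s)
  have hg2' : ∀ s ∈ Icc (0:ℝ) 1, HasDerivAt g2 (fderiv ℝ (fderiv ℝ f) (c s) v v) s := by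
    intro s hs
    have h1 : HasFDerivAt (fun z => fderiv ℝ f z v)
        ((ContinuousLinearMap.apply ℝ ℝ v).comp (fderiv ℝ (fderiv ℝ f) (c s))) (c s) :=
      (ContinuousLinearMap.apply ℝ ℝ v).hasFDerivAt.comp (c s) (hFd _ (hmem s hs))
    simpa [hg2, Function.comp_def] using h1.comp_hasDerivAt s (hderivc s)
  have hg2lb : ∀ s ∈ Icc (0:ℝ) 1, h * ‖v‖ ^ 2 ≤ fderiv ℝ (fderiv ℝ f) (c s) v v := by
    intro s hs
    have h2 := hHess _ (hmem s hs) v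
    rw [iteratedFDeriv_two_apply] at h2
    simpa using h2
  -- step 1: g2 s ≥ g2 0 + h‖v‖² s on Icc 0 1
  set p : ℝ → ℝ := fun s => g2 s - g2 0 - h * ‖v‖ ^ 2 * s with hp
  have hp' : ∀ s ∈ Icc (0:ℝ) 1, HasDerivAt p (fderiv ℝ (fderiv ℝ f) (c s) v v - h * ‖v‖ ^ 2) s := by
    intro s hs
    simpa [hp, Pi.sub_def] using (((hg2' s hs).sub_const (g2 0)).sub ((hasDerivAt_id s).const_mul (h * ‖v‖ ^ 2)))
  have hpmono : MonotoneOn p (Icc 0 1) := by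
    apply monotoneOn_of_deriv_nonneg (convex_Icc 0 1)
    · exact fun s hs => ((hp' s hs).continuousAt).continuousWithinAt
    · intro s hs
      rw [interior_Icc] at hs
      exact ((hp' s (Ioo_subset_Icc_self hs)).differentiableAt).differentiableWithinAt
    · intro s hs
      rw [interior_Icc] at hs
      rw [(hp' s (Ioo_subset_Icc_self hs)).deriv]
      have := hg2lb s (Ioo_subset_Icc_self hs)
      linarith
  have hplb : ∀ s ∈ Icc (0:ℝ) 1, g2 0 + h * ‖v‖ ^ 2 * s ≤ g2 s := by
    intro s hs
    have := hpmono (left_mem_Icc.2 zero_le_one) hs hs.1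
    simp only [hp] at this
    linarith [this]
  -- step 2
  set q : ℝ → ℝ := fun s => g1 s - g1 0 - g2 0 * s - h * ‖v‖ ^ 2 / 2 * s ^ 2 with hq
  have hq' : ∀ s ∈ Icc (0:ℝ) 1, HasDerivAt q (g2 s - g2 0 - h * ‖v‖ ^ 2 * s) s := by
    intro s hs
    have h1 : HasDerivAt (fun s : ℝ => h * ‖v‖ ^ 2 / 2 * s ^ 2) (h * ‖v‖ ^ 2 / 2 * (2 * s)) s := by
      simpa using ((hasDerivAt_pow 2 s).const_mul (h * ‖v‖ ^ 2 / 2))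
    have := (((hg1' s hs).sub_const (g1 0)).sub ((hasDerivAt_id s).const_mul (g2 0))).sub h1
    convert this using 1
    · rfl
    · rfl
    · rfl
    · ring
  have hqmono : MonotoneOn q (Icc 0 1) := by
    apply monotoneOn_of_deriv_nonneg (convex_Icc 0 1)
    · exact fun s hs => ((hq' s hs).continuousAt).continuousWithinAt
    · intro s hs
      rw [interior_Icc] at hs
      exact ((hq' s (Ioo_subset_Icc_self hs)).differentiableAt).differentiableWithinAt
    · intro s hs
      rw [interior_Icc] at hs
      rw [(hq' s (Ioo_subset_Icc_self hs)).deriv]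
      have := hplb s (Ioo_subset_Icc_self hs)
      linarith
  have hfin := hqmono (left_mem_Icc.2 zero_le_one) (right_mem_Icc.2 zero_le_one) zero_le_one
  simp only [hq, hg1, hg2, hc] at hfin
  have hc1 : x + (1:ℝ) • v = y := by simp [hv]
  have hc0 : x + (0:ℝ) • v = x := by simp
  rw [hc1, hc0] at hfin
  have hgrad : ⟪gradient f x, v⟫ = fderiv ℝ f x v :=
    InnerProductSpace.toDual_symm_apply
  rw [hgrad]
  nlinarith [hfin]
set_option maxHeartbeats 1000000 in
theorem gradient_descent_linear_rate {E : Type*} [NormedAddCommGroup E]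
    [InnerProductSpace ℝ E] [CompleteSpace E]
    (f : E → ℝ) (S : Set E) (hconv : Convex ℝ S) (hopen : IsOpen S)
    (xbar : E) (hxbar : xbar ∈ S) (h H : ℝ) (hh : 0 < h) (hhH : h ≤ H)
    (hf : ContDiffOn ℝ 2 f S)
    (hcrit : gradient f xbar = 0)
    (hHess : ∀ x ∈ S, ∀ v : E,
      h * ‖v‖ ^ 2 ≤ iteratedFDeriv ℝ 2 f x ![v, v] ∧
      iteratedFDeriv ℝ 2 f x ![v, v] ≤ H * ‖v‖ ^ 2)
    (x : E) (hx : x ∈ S) (t : ℝ) (ht : t ∈ Set.Ioo 0 (2 / H))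
    (hdesc : f (x - t • gradient f x)
      ≤ f x - t * (1 - H * t / 2) * ‖gradient f x‖ ^ 2) :
    f (x - t • gradient f x) - f xbar
        ≤ (1 - (t * H) * (1 - (t * H) / 2) * (h / H) * (1 + h / H)) * (f x - f xbar) ∧
      0 ≤ 1 - (t * H) * (1 - (t * H) / 2) * (h / H) * (1 + h / H) ∧
      1 - (t * H) * (1 - (t * H) / 2) * (h / H) * (1 + h / H) < 1 := by
  have hH : 0 < H := lt_of_lt_of_le hh hhH
  -- f x - f xbar ≥ 0
  have h1 := taylor_lb f S hconv hopen h hf (fun z hz v => (hHess z hz v).1) hxbar hx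
  rw [hcrit] at h1
  simp only [inner_zero_left] at h1
  have hD : 0 ≤ f x - f xbar := by nlinarith [sq_nonneg ‖x - xbar‖, hh.le]
  -- PL inequality
  have h2 := taylor_lb f S hconv hopen h hf (fun z hz v => (hHess z hz v).1) hx hxbar
  have hinner : ⟪gradient f x, xbar - x⟫ ≥ -(‖gradient f x‖ * ‖xbar - x‖) := by
    have := abs_real_inner_le_norm (gradient f x) (xbar - x)
    cases abs_le.1 this with
    | intro a b => linarith
  have hPL : 2 * h * (f x - f xbar) ≤ ‖gradient f x‖ ^ 2 := by
    nlinarith [sq_nonneg (‖gradient f x‖ - h * ‖xbar - x‖), hh, sq_nonneg ‖xbar - x‖]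
  -- arithmetic
  obtain ⟨ht0, ht2⟩ := ht
  have htH : t * H < 2 := by
    rw [lt_div_iff₀ hH] at ht2; linarith
  have hr1 : h / H ≤ 1 := (div_le_one hH).2 hhH
  have hr0 : 0 < h / H := div_pos hh hH
  have hA : 0 < t * (1 - H * t / 2) := by
    apply mul_pos ht0; nlinarith
  have hkey : (t * H) * (1 - (t * H) / 2) * (h / H) * (1 + h / H)
      = (t * (1 - H * t / 2)) * (h * (1 + h / H)) := by
    field_simp
  refine ⟨?_, ?_, ?_⟩
  · rw [hkey]
    have hco : h * (1 + h / H) ≤ 2 * h := by nlinarith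
    nlinarith [mul_le_mul_of_nonneg_left hco hA.le,
      mul_le_mul_of_nonneg_left hPL hA.le,
      mul_le_mul_of_nonneg_right hco hD]
  · have e1 : (t * H) * (1 - (t * H) / 2) ≤ 1 / 2 := by nlinarith [sq_nonneg (t * H - 1)]
    have e0 : 0 ≤ (t * H) * (1 - (t * H) / 2) := by
      apply mul_nonneg (by positivity); linarith
    have e2 : (h / H) * (1 + h / H) ≤ 2 := by nlinarith
    have e0' : (0:ℝ) ≤ (h / H) * (1 + h / H) := by positivity
    have e3 := mul_le_mul e1 e2 e0' (by norm_num)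
    have e4 : (t * H) * (1 - (t * H) / 2) * (h / H) * (1 + h / H)
        = ((t * H) * (1 - (t * H) / 2)) * ((h / H) * (1 + h / H)) := by ring
    linarith [e4 ▸ e3]
  · rw [hkey]
    linarith [mul_pos hA (mul_pos hh (by positivity : (0:ℝ) < 1 + h / H))]
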